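/- If G is a k-degenerate simple graph with at least one edge, then there exists a vertex w of G such that at least max{1, deg(w) − k} of the neighbors of w have degree at most k. -/

import Mathlib

/-- A strong edge coloring: any two distinct edges that are adjacent or both
adjacent to a common third edge receive distinct colors. -/
def SimpleGraph.IsStrongEdgeColoring {V : Type*} (G : SimpleGraph V)
    (C : Sym2 V → ℕ) : Prop :=
  ∀ e ∈ G.edgeSet, ∀ f ∈ G.edgeSet, e ≠ f →
    ((∃ v, v ∈ e ∧ v ∈ f) ∨
      ∃ g ∈ G.edgeSet, (∃ v, v ∈ e ∧ v ∈ g) ∧ ∃ w, w ∈ g ∧ w ∈ f) →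
    C e ≠ C f

/-- The strong chromatic index: the least number of colors in a strong edge
coloring of `G`. -/
noncomputable def SimpleGraph.strongChromaticIndex {V : Type*}
    (G : SimpleGraph V) : ℕ :=
  sInf {n | ∃ C : Sym2 V → ℕ, (∀ e ∈ G.edgeSet, C e < n) ∧
    G.IsStrongEdgeColoring C}

/-- A graph is `k`-degenerate if every (induced) subgraph on a nonempty vertex
set has a vertex of degree at most `k` in that subgraph. -/
def SimpleGraph.Degenerate {V : Type*} [Fintype V] (G : SimpleGraph V)
    [DecidableRel G.Adj] (k : ℕ) : Prop :=
  ∀ S : Finset V, S.Nonempty → ∃ v ∈ S, (S.filter (G.Adj v)).card ≤ k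

theorem degenerate_exists_nice_vertex {V : Type*} [Fintype V]
    (G : SimpleGraph V) [DecidableRel G.Adj] (k : ℕ)
    (hdeg : G.Degenerate k) (hne : G.edgeSet.Nonempty) :
    ∃ w : V, max 1 (G.degree w - k) ≤
      ((G.neighborFinset w).filter (fun u => G.degree u ≤ k)).card := by
  classical
  by_cases hall : ∀ v : V, G.degree v ≤ k
  · -- every vertex has degree ≤ k
    obtain ⟨e, he⟩ := hne
    induction e with
    | h u v =>
      refine ⟨u, ?_⟩
      have hadj : G.Adj u v := he
      have hmem : v ∈ (G.neighborFinset u).filter (fun u => G.degree u ≤ k) := by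
        simp [SimpleGraph.mem_neighborFinset, hadj, hall v]
      have h1 : 1 ≤ ((G.neighborFinset u).filter (fun u => G.degree u ≤ k)).card :=
        Finset.card_pos.mpr ⟨v, hmem⟩
      have h0 : G.degree u - k = 0 := Nat.sub_eq_zero_of_le (hall u)
      omega
  · push_neg at hall
    obtain ⟨v0, hv0⟩ := hall
    set S : Finset V := Finset.univ.filter (fun v => k < G.degree v) with hS
    have hSne : S.Nonempty := ⟨v0, by simp [hS, hv0]⟩
    obtain ⟨w, hwS, hwcard⟩ := hdeg S hSne
    have hwdeg : k < G.degree w := by simpa [hS] using hwS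
    refine ⟨w, ?_⟩
    have hcomm : S.filter (G.Adj w) =
        (G.neighborFinset w).filter (fun u => ¬ G.degree u ≤ k) := by
      ext x
      simp [hS, SimpleGraph.mem_neighborFinset, and_comm,
        Nat.not_le]
    have hsplit : ((G.neighborFinset w).filter (fun u => G.degree u ≤ k)).card +
        ((G.neighborFinset w).filter (fun u => ¬ G.degree u ≤ k)).card =
        (G.neighborFinset w).card :=
      Finset.card_filter_add_card_filter_not _
    have hdegw : (G.neighborFinset w).card = G.degree w :=
      G.card_neighborFinset_eq_degree w
    rw [hcomm] at hwcard
    omega
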